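/- Let W₁, …, Wₙ be i.i.d. centered Gaussian random variables with variance σ², independent of a random vector (A₁, …, Aₙ) of square-integrable real random variables with E[Aⱼ²] = v for all j, and let p₁, …, pₙ be real constants. Let Z = ∑ⱼ pⱼ Wⱼ Aⱼ. Then E[(max(0, Z))²] = (σ²/2)·v·∑ⱼ pⱼ². In particular, if σ² = 2/(∑ⱼ pⱼ²) (with not all pⱼ zero), then E[(max(0, Z))²] = v. -/

import Mathlib

open MeasureTheory ProbabilityTheory

open Real Filter Set
open scoped NNReal ENNReal

lemma aux_integral_comp_neg (f : ℝ → ℝ) : ∫ x, f (-x) = ∫ x, f x := by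
  have A : MeasurableEmbedding (fun x : ℝ => -x) :=
    (Homeomorph.neg ℝ).measurableEmbedding
  conv_rhs => rw [← Measure.map_neg_eq_self (volume : Measure ℝ)]
  exact (A.integral_map f).symm ▸ rfl

lemma aux_integral_self_mul_exp (b : ℝ) :
    ∫ x : ℝ, x * rexp (-b * x ^ 2) = 0 := by
  have h := aux_integral_comp_neg (fun x => x * rexp (-b * x ^ 2))
  simp only [neg_sq, mul_comm] at h
  have h2 : ∫ x : ℝ, -x * rexp (-b * x ^ 2) = ∫ x : ℝ, x * rexp (-b * x ^ 2) := by
    simpa using h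
  have h3 : ∫ x : ℝ, -x * rexp (-b * x ^ 2) = -∫ x : ℝ, x * rexp (-b * x ^ 2) := by
    simp_rw [neg_mul]
    exact integral_neg _
  linarith [h2, h3.symm]

lemma aux_integrable_sq_mul_exp {b : ℝ} (hb : 0 < b) :
    Integrable (fun x : ℝ => x ^ 2 * rexp (-b * x ^ 2)) := by
  have := integrable_rpow_mul_exp_neg_mul_sq hb (s := 2) (by norm_num)
  convert this using 2 with x
  rw [show ((2:ℝ)) = ((2:ℕ):ℝ) by norm_num, Real.rpow_natCast]

lemma aux_integral_sq_mul_exp {b : ℝ} (hb : 0 < b) :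
    ∫ x : ℝ, x ^ 2 * rexp (-b * x ^ 2) = (2 * b)⁻¹ * Real.sqrt (π / b) := by
  have hu : ∀ x : ℝ, HasDerivAt (fun y : ℝ => y) 1 x := fun x => hasDerivAt_id x
  have hv : ∀ x : ℝ, HasDerivAt (fun y : ℝ => -(2 * b)⁻¹ * rexp (-b * y ^ 2))
      (x * rexp (-b * x ^ 2)) x := by
    intro x
    have h1 : HasDerivAt (fun y : ℝ => -b * y ^ 2) (-b * (2 * x)) x := by
      simpa using ((hasDerivAt_pow 2 x).const_mul (-b))
    have h2 := (h1.exp).const_mul (-(2 * b)⁻¹)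
    convert h2 using 1
    · rfl
    · rfl
    field_simp
  have huv' : Integrable (fun x : ℝ => x * (x * rexp (-b * x ^ 2))) := by
    have := aux_integrable_sq_mul_exp hb
    convert this using 2 with x; ring
  have hu'v : Integrable (fun x : ℝ => 1 * (-(2 * b)⁻¹ * rexp (-b * x ^ 2))) := by
    simp_rw [one_mul]
    exact (integrable_exp_neg_mul_sq hb).const_mul _
  have huv : Integrable (fun x : ℝ => x * (-(2 * b)⁻¹ * rexp (-b * x ^ 2))) := by
    have := (integrable_mul_exp_neg_mul_sq hb).const_mul (-(2 * b)⁻¹)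
    convert this using 2 with x; ring
  have := integral_mul_deriv_eq_deriv_mul_of_integrable (fun x _ => hu x) (fun x _ => hv x) huv' hu'v huv
  simp only [one_mul] at this
  have e1 : ∫ x : ℝ, x * (x * rexp (-b * x ^ 2)) = ∫ x : ℝ, x ^ 2 * rexp (-b * x ^ 2) := by
    congr 1; ext x; ring
  have e2 : ∫ x : ℝ, -(2 * b)⁻¹ * rexp (-b * x ^ 2) = -(2 * b)⁻¹ * Real.sqrt (π / b) := by
    rw [integral_const_mul, integral_gaussian]
  rw [e1, e2] at this
  rw [this]; ring

lemma aux_gaussianPDF_eq (s : ℝ≥0) :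
    gaussianPDF 0 s = fun x => ((Real.toNNReal (gaussianPDFReal 0 s x) : ℝ≥0) : ℝ≥0∞) := by
  rfl

lemma aux_pdf_form (s : ℝ≥0) (hs : s ≠ 0) (x : ℝ) :
    gaussianPDFReal 0 s x = (Real.sqrt (2 * π * s))⁻¹ * rexp (-(2 * (s:ℝ))⁻¹ * x ^ 2) := by
  have hs' : (0:ℝ) < s := lt_of_le_of_ne (s.coe_nonneg) (by exact_mod_cast (Ne.symm hs))
  rw [gaussianPDFReal]
  congr 1
  rw [sub_zero]
  congr 1
  field_simp

lemma aux_gaussian_integral_eq (s : ℝ≥0) (hs : s ≠ 0) (g : ℝ → ℝ) :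
    ∫ x, g x ∂(gaussianReal 0 s) = ∫ x, gaussianPDFReal 0 s x * g x := by
  rw [gaussianReal_of_var_ne_zero 0 hs, aux_gaussianPDF_eq,
    integral_withDensity_eq_integral_smul ((measurable_gaussianPDFReal 0 s).real_toNNReal) g]
  congr 1
  ext x
  simp [NNReal.smul_def, Real.coe_toNNReal _ (gaussianPDFReal_nonneg 0 s x)]

lemma aux_gaussian_integrable_iff (s : ℝ≥0) (hs : s ≠ 0) (g : ℝ → ℝ) :
    Integrable g (gaussianReal 0 s) ↔
      Integrable (fun x => gaussianPDFReal 0 s x * g x) volume := by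
  rw [gaussianReal_of_var_ne_zero 0 hs, aux_gaussianPDF_eq,
    integrable_withDensity_iff_integrable_smul ((measurable_gaussianPDFReal 0 s).real_toNNReal)]
  constructor <;> intro h <;> [skip; skip] <;>
  · apply h.congr
    filter_upwards with x
    simp [NNReal.smul_def, Real.coe_toNNReal _ (gaussianPDFReal_nonneg 0 s x)]

lemma aux_gaussian_integrable_sq (s : ℝ≥0) :
    Integrable (fun x : ℝ => x ^ 2) (gaussianReal 0 s) := by
  by_cases hs : s = 0
  · subst hs
    rw [gaussianReal_zero_var]
    exact (integrable_const ((0:ℝ)^2)).congr (ae_eq_dirac (fun x : ℝ => x ^ 2)).symm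
  · have hs' : (0:ℝ) < s := lt_of_le_of_ne (s.coe_nonneg) (by exact_mod_cast (Ne.symm hs))
    have hb : (0:ℝ) < (2 * (s:ℝ))⁻¹ := by positivity
    rw [aux_gaussian_integrable_iff s hs]
    have := (aux_integrable_sq_mul_exp hb).const_mul (Real.sqrt (2 * π * s))⁻¹
    apply this.congr
    filter_upwards with x
    rw [aux_pdf_form s hs]
    ring

lemma aux_gaussian_memℒp2 (s : ℝ≥0) : MemLp (id : ℝ → ℝ) 2 (gaussianReal 0 s) := by
  rw [memLp_two_iff_integrable_sq aestronglyMeasurable_id]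
  simpa using aux_gaussian_integrable_sq s

lemma aux_gaussian_mean (s : ℝ≥0) : ∫ x, x ∂(gaussianReal 0 s) = 0 := by
  by_cases hs : s = 0
  · subst hs; rw [gaussianReal_zero_var]; simp [integral_dirac]
  · have hs' : (0:ℝ) < s := lt_of_le_of_ne (s.coe_nonneg) (by exact_mod_cast (Ne.symm hs))
    rw [aux_gaussian_integral_eq s hs]
    have h : ∀ x : ℝ, gaussianPDFReal 0 s x * x
        = (Real.sqrt (2 * π * s))⁻¹ * (x * rexp (-(2 * (s:ℝ))⁻¹ * x ^ 2)) := by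
      intro x; rw [aux_pdf_form s hs]; ring
    simp_rw [h]
    rw [integral_const_mul, aux_integral_self_mul_exp ((2 * (s:ℝ))⁻¹), mul_zero]

lemma aux_gaussian_sq_moment (s : ℝ≥0) : ∫ x, x ^ 2 ∂(gaussianReal 0 s) = s := by
  by_cases hs : s = 0
  · subst hs; rw [gaussianReal_zero_var]; simp [integral_dirac]
  · have hs' : (0:ℝ) < s := lt_of_le_of_ne (s.coe_nonneg) (by exact_mod_cast (Ne.symm hs))
    have hb : (0:ℝ) < (2 * (s:ℝ))⁻¹ := by positivity
    rw [aux_gaussian_integral_eq s hs]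
    have h : ∀ x : ℝ, gaussianPDFReal 0 s x * x ^ 2
        = (Real.sqrt (2 * π * s))⁻¹ * (x ^ 2 * rexp (-(2 * (s:ℝ))⁻¹ * x ^ 2)) := by
      intro x; rw [aux_pdf_form s hs]; ring
    simp_rw [h]
    rw [integral_const_mul, aux_integral_sq_mul_exp hb]
    have h1 : (2 * ((2 * (s:ℝ))⁻¹))⁻¹ = (s:ℝ) := by field_simp
    have h2 : π / (2 * (s:ℝ))⁻¹ = 2 * π * s := by field_simp
    rw [h1, h2]
    have h3 : Real.sqrt (2 * π * s) ≠ 0 := by positivity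
    field_simp

lemma aux_map_pi {Ω : Type*} [MeasurableSpace Ω] (μ : Measure Ω) [IsProbabilityMeasure μ]
    {n : ℕ} (W : Fin n → Ω → ℝ) (hW : ∀ j, Measurable (W j))
    (h : iIndepFun W μ) :
    μ.map (fun ω j => W j ω) = Measure.pi (fun j => μ.map (W j)) := by
  haveI : ∀ j, SigmaFinite (μ.map (W j)) := fun j => by
    haveI := Measure.isProbabilityMeasure_map (μ := μ) (f := W j) (hW j).aemeasurable
    infer_instance
  refine (Measure.pi_eq fun t ht => ?_).symm
  rw [Measure.map_apply (measurable_pi_iff.mpr hW) (MeasurableSet.univ_pi ht)]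
  have hpre : (fun ω j => W j ω) ⁻¹' (Set.univ.pi t) = ⋂ j ∈ Finset.univ, W j ⁻¹' t j := by
    ext ω; simp [Set.mem_pi]
  rw [hpre, h.measure_inter_preimage_eq_mul Finset.univ (fun i _ => ht i)]
  exact Finset.prod_congr rfl fun j _ =>
    (Measure.map_apply (hW j) (ht j)).symm

/-- ReLU case of Theorem 3.1: with i.i.d. centered Gaussian weights of variance `s`,
independent of activations with common second moment `v`, the second moment of the ReLU of
the rescaled pre-activation `Z = ∑ j, p j * W j * A j` is `(s / 2) * v * ∑ j, (p j)^2`;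
in particular, choosing `s = 2 / ∑ j, (p j)^2` makes it equal to `v`. -/
theorem relu_preactivation_second_moment
    {Ω : Type*} [MeasurableSpace Ω] (μ : Measure Ω) [IsProbabilityMeasure μ]
    {n : ℕ} (W A : Fin n → Ω → ℝ) (p : Fin n → ℝ) (s : NNReal) (v : ℝ)
    (hWmeas : ∀ j, Measurable (W j)) (hAmeas : ∀ j, Measurable (A j))
    (hWdist : ∀ j, μ.map (W j) = gaussianReal 0 s)
    (hWindep : iIndepFun W μ)
    (hAL2 : ∀ j, MemLp (A j) 2 μ)
    (hAmom : ∀ j, ∫ ω, (A j ω) ^ 2 ∂μ = v)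
    (hWA : IndepFun (fun ω (j : Fin n) => W j ω) (fun ω (j : Fin n) => A j ω) μ) :
    (∫ ω, (max 0 (∑ j, p j * W j ω * A j ω)) ^ 2 ∂μ = ((s : ℝ) / 2) * v * ∑ j, (p j) ^ 2)
    ∧ ((∃ j, p j ≠ 0) → (s : ℝ) = 2 / ∑ j, (p j) ^ 2 →
        ∫ ω, (max 0 (∑ j, p j * W j ω * A j ω)) ^ 2 ∂μ = v) := by
  -- notation
  set Wv : Ω → (Fin n → ℝ) := fun ω j => W j ω with hWv
  set Av : Ω → (Fin n → ℝ) := fun ω j => A j ω with hAv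
  have hWvm : Measurable Wv := measurable_pi_iff.mpr hWmeas
  have hAvm : Measurable Av := measurable_pi_iff.mpr hAmeas
  set Z : Ω → ℝ := fun ω => ∑ j, p j * (W j ω * A j ω) with hZ
  have hZmeas : Measurable Z :=
    Finset.measurable_sum _ fun j _ => (((hWmeas j).mul (hAmeas j)).const_mul (p j))
  -- marginal facts about W
  have hWL2 : ∀ j, MemLp (W j) 2 μ := by
    intro j
    have h := aux_gaussian_memℒp2 s
    rw [← hWdist j] at h
    exact (memLp_map_measure_iff aestronglyMeasurable_id (hWmeas j).aemeasurable).mp h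
  have hWsq : ∀ j, ∫ ω, W j ω ^ 2 ∂μ = (s : ℝ) := by
    intro j
    have hmap := integral_map (μ := μ) (hWmeas j).aemeasurable
      (f := fun x : ℝ => x ^ 2) ((measurable_id.pow_const 2).aestronglyMeasurable)
    have h2 := aux_gaussian_sq_moment s
    rw [← hWdist j, hmap] at h2
    exact h2
  have hWmean : ∀ j, ∫ ω, W j ω ∂μ = 0 := by
    intro j
    have hmap := integral_map (μ := μ) (hWmeas j).aemeasurable
      (f := fun x : ℝ => x) (measurable_id.aestronglyMeasurable)
    have h2 := aux_gaussian_mean s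
    rw [← hWdist j, hmap] at h2
    exact h2
  -- independence of single coordinates
  have hWAj : ∀ j k : Fin n, IndepFun (fun ω => W j ω * W k ω) (fun ω => A j ω * A k ω) μ := by
    intro j k
    exact hWA.comp (((measurable_pi_apply j)).mul ((measurable_pi_apply k)))
      (((measurable_pi_apply j)).mul ((measurable_pi_apply k)))
  -- each term is in L²
  have hterm : ∀ j, MemLp (fun ω => p j * (W j ω * A j ω)) 2 μ := by
    intro j
    have hsq : Integrable (fun ω => (W j ω * A j ω) ^ 2) μ := by
      have hind : IndepFun (fun ω => W j ω ^ 2) (fun ω => A j ω ^ 2) μ :=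
        (hWA.comp (measurable_pi_apply j) (measurable_pi_apply j)).comp
          (measurable_id.pow_const 2) (measurable_id.pow_const 2)
      have := hind.integrable_mul ((hWL2 j).integrable_sq) ((hAL2 j).integrable_sq)
      apply this.congr
      filter_upwards with ω
      simp [Pi.mul_apply, mul_pow]
    have hmul : MemLp (fun ω => W j ω * A j ω) 2 μ :=
      (memLp_two_iff_integrable_sq (((hWmeas j).mul (hAmeas j)).aestronglyMeasurable)).mpr hsq
    exact hmul.const_mul (p j)
  have hZ2 : MemLp Z 2 μ := by
    have := memLp_finset_sum (Finset.univ : Finset (Fin n))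
      (f := fun j ω => p j * (W j ω * A j ω)) (fun j _ => hterm j)
    exact this.ae_eq (by filter_upwards with ω; simp [hZ])
  have hZsqInt : Integrable (fun ω => Z ω ^ 2) μ := hZ2.integrable_sq
  -- symmetry: E[relu(Z)^2] = E[relu(-Z)^2]
  set g : (Fin n → ℝ) × (Fin n → ℝ) → ℝ :=
    fun q => (max 0 (∑ j, p j * (q.1 j * q.2 j))) ^ 2 with hg
  have hgm : Measurable g := by
    apply Measurable.pow_const
    apply Measurable.max measurable_const
    exact Finset.measurable_sum _ fun j _ =>
      (((measurable_pi_apply j).comp measurable_fst).mul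
        ((measurable_pi_apply j).comp measurable_snd) :
          Measurable fun a : (Fin n → ℝ) × (Fin n → ℝ) => a.1 j * a.2 j).const_mul (p j)
  have hpair : μ.map (fun ω => (Wv ω, Av ω)) = (μ.map Wv).prod (μ.map Av) :=
    (indepFun_iff_map_prod_eq_prod_map_map hWvm.aemeasurable hAvm.aemeasurable).mp hWA
  have hWneg : ∀ j, μ.map (fun ω => -W j ω) = gaussianReal 0 s := by
    intro j
    have h1 : μ.map (fun ω => -W j ω) = (μ.map (W j)).map (fun x : ℝ => -1 * x) := by
      have hm : Measurable (fun x : ℝ => -1 * x) := by fun_prop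
      rw [Measure.map_map hm (hWmeas j)]
      congr 1
      funext ω
      simp [Function.comp]
    rw [h1, hWdist j, gaussianReal_map_const_mul (-1 : ℝ)]
    congr 1
    · norm_num
    · ext
      push_cast
      norm_num
  have hWv' : μ.map (fun ω j => -W j ω) = μ.map Wv := by
    have hind' : iIndepFun (fun j ω => -W j ω) μ :=
      hWindep.comp (fun _ => fun x : ℝ => -x) (fun _ => measurable_neg)
    rw [aux_map_pi μ W hWmeas hWindep, aux_map_pi μ (fun j ω => -W j ω)
      (fun j => (hWmeas j).neg) hind']
    congr 1
    funext j
    rw [hWneg j, hWdist j]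
  have hWA' : IndepFun (fun ω (j : Fin n) => -W j ω) Av μ := by
    have := hWA.comp (φ := fun w : Fin n → ℝ => fun j => -w j) (ψ := id)
      (measurable_pi_iff.mpr fun j => (measurable_pi_apply j).neg) measurable_id
    exact this
  have hpair' : μ.map (fun ω => ((fun j => -W j ω), Av ω)) = (μ.map Wv).prod (μ.map Av) := by
    rw [(indepFun_iff_map_prod_eq_prod_map_map
      (show Measurable (fun ω (j : Fin n) => -W j ω) from
        measurable_pi_iff.mpr fun j => (hWmeas j).neg).aemeasurable hAvm.aemeasurable).mp hWA',
      hWv']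
  have hsymm : ∫ ω, (max 0 (Z ω)) ^ 2 ∂μ = ∫ ω, (max 0 (-Z ω)) ^ 2 ∂μ := by
    have e1 : ∫ ω, (max 0 (Z ω)) ^ 2 ∂μ = ∫ q, g q ∂((μ.map Wv).prod (μ.map Av)) := by
      rw [← hpair, integral_map (hWvm.prodMk hAvm).aemeasurable hgm.aestronglyMeasurable]
    have e2 : ∫ q, g q ∂((μ.map Wv).prod (μ.map Av))
        = ∫ ω, g ((fun j => -W j ω), Av ω) ∂μ := by
      rw [← hpair', integral_map
        ((show Measurable (fun ω (j : Fin n) => -W j ω) from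
          measurable_pi_iff.mpr fun j => (hWmeas j).neg).prodMk hAvm).aemeasurable
        hgm.aestronglyMeasurable]
    rw [e1, e2]
    congr 1
    funext ω
    simp only [hg]
    congr 2
    rw [hZ]
    rw [← Finset.sum_neg_distrib]
    exact Finset.sum_congr rfl fun j _ => by ring
  -- relu(z)^2 + relu(-z)^2 = z^2
  have hrelu : ∀ z : ℝ, (max 0 z) ^ 2 + (max 0 (-z)) ^ 2 = z ^ 2 := by
    intro z
    rcases le_total 0 z with h | h
    · rw [max_eq_right h, max_eq_left (neg_nonpos.mpr h)]; ring
    · rw [max_eq_left h, max_eq_right (neg_nonneg.mpr h)]; ring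
  have hIntP : Integrable (fun ω => (max 0 (Z ω)) ^ 2) μ := by
    refine MemLp.integrable_sq ?_
    refine hZ2.of_le ((measurable_const.max hZmeas).aestronglyMeasurable) ?_
    filter_upwards with ω
    simp only [Real.norm_eq_abs]
    rcases le_total 0 (Z ω) with h | h
    · rw [max_eq_right h]
    · rw [max_eq_left h, abs_zero]; exact abs_nonneg _
  have hIntN : Integrable (fun ω => (max 0 (-Z ω)) ^ 2) μ := by
    refine MemLp.integrable_sq ?_
    refine hZ2.of_le ((measurable_const.max hZmeas.neg).aestronglyMeasurable) ?_
    filter_upwards with ω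
    simp only [Real.norm_eq_abs]
    rcases le_total 0 (-Z ω) with h | h
    · rw [max_eq_right h, abs_neg]
    · rw [max_eq_left h, abs_zero]; exact abs_nonneg _
  have hsum2 : ∫ ω, (max 0 (Z ω)) ^ 2 ∂μ + ∫ ω, (max 0 (-Z ω)) ^ 2 ∂μ
      = ∫ ω, Z ω ^ 2 ∂μ := by
    rw [← integral_add hIntP hIntN]
    exact integral_congr_ae (by filter_upwards with ω; exact hrelu (Z ω))
  -- compute E[Z^2]
  have hZsq : ∫ ω, Z ω ^ 2 ∂μ = (s : ℝ) * v * ∑ j, p j ^ 2 := by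
    have hexp : ∀ ω, Z ω ^ 2 = ∑ j, ∑ k,
        (p j * (W j ω * A j ω)) * (p k * (W k ω * A k ω)) := by
      intro ω
      rw [hZ, pow_two, Finset.sum_mul_sum]
    have hintjk : ∀ j k : Fin n, Integrable
        (fun ω => (p j * (W j ω * A j ω)) * (p k * (W k ω * A k ω))) μ := by
      intro j k
      have := (hterm k).smul (hterm j) (r := 1)
      rw [memLp_one_iff_integrable] at this
      apply this.congr
      filter_upwards with ω
      simp [smul_eq_mul]
    have hval : ∀ j k : Fin n,
        ∫ ω, (p j * (W j ω * A j ω)) * (p k * (W k ω * A k ω)) ∂μ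
          = if k = j then p j ^ 2 * ((s : ℝ) * v) else 0 := by
      intro j k
      have e : ∀ ω, (p j * (W j ω * A j ω)) * (p k * (W k ω * A k ω))
          = (p j * p k) * ((W j ω * W k ω) * (A j ω * A k ω)) := fun ω => by ring
      simp_rw [e]
      rw [integral_const_mul]
      have hWW : AEStronglyMeasurable (fun ω => W j ω * W k ω) μ :=
        ((hWmeas j).mul (hWmeas k)).aestronglyMeasurable
      have hAA : AEStronglyMeasurable (fun ω => A j ω * A k ω) μ :=
        ((hAmeas j).mul (hAmeas k)).aestronglyMeasurable
      rw [(hWAj j k).integral_fun_mul_eq_mul_integral hWW hAA]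
      by_cases hjk : k = j
      · subst hjk
        have h1 : ∫ ω, W k ω * W k ω ∂μ = (s : ℝ) := by
          simpa [pow_two] using hWsq k
        have h2 : ∫ ω, A k ω * A k ω ∂μ = v := by
          simpa [pow_two] using hAmom k
        rw [if_pos rfl, h1, h2]
        ring
      · have hind : IndepFun (W j) (W k) μ := hWindep.indepFun (Ne.symm hjk)
        have h1 : ∫ ω, W j ω * W k ω ∂μ = 0 := by
          rw [hind.integral_fun_mul_eq_mul_integral (hWmeas j).aestronglyMeasurable
            (hWmeas k).aestronglyMeasurable, hWmean j, zero_mul]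
        rw [if_neg hjk, h1]
        ring
    calc ∫ ω, Z ω ^ 2 ∂μ
        = ∫ ω, ∑ j, ∑ k, (p j * (W j ω * A j ω)) * (p k * (W k ω * A k ω)) ∂μ := by
          exact integral_congr_ae (by filter_upwards with ω; exact hexp ω)
      _ = ∑ j, ∑ k, ∫ ω, (p j * (W j ω * A j ω)) * (p k * (W k ω * A k ω)) ∂μ := by
          rw [integral_finset_sum _ fun j _ => integrable_finset_sum _ fun k _ => hintjk j k]
          exact Finset.sum_congr rfl fun j _ => integral_finset_sum _ fun k _ => hintjk j k
      _ = ∑ j, p j ^ 2 * ((s : ℝ) * v) := by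
          refine Finset.sum_congr rfl fun j _ => ?_
          rw [Finset.sum_congr rfl fun k _ => hval j k]
          simp
      _ = (s : ℝ) * v * ∑ j, p j ^ 2 := by
          rw [Finset.mul_sum]
          exact Finset.sum_congr rfl fun j _ => by ring
  -- conclude
  have key : ∫ ω, (max 0 (∑ j, p j * W j ω * A j ω)) ^ 2 ∂μ
      = ((s : ℝ) / 2) * v * ∑ j, (p j) ^ 2 := by
    have hZeq : ∀ ω, (∑ j, p j * W j ω * A j ω) = Z ω := by
      intro ω; rw [hZ]; exact Finset.sum_congr rfl fun j _ => by ring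
    simp_rw [hZeq]
    have : (2 : ℝ) * ∫ ω, (max 0 (Z ω)) ^ 2 ∂μ = (s : ℝ) * v * ∑ j, p j ^ 2 := by
      rw [two_mul]
      nth_rewrite 2 [hsymm]
      rw [hsum2, hZsq]
    linarith [this]
  refine ⟨key, fun hex hs => ?_⟩
  obtain ⟨j, hj⟩ := hex
  have hpos : 0 < ∑ j, p j ^ 2 :=
    Finset.sum_pos' (fun i _ => sq_nonneg _) ⟨j, Finset.mem_univ j, by positivity⟩
  rw [key, hs]
  field_simp
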